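/- For k ≥ r ≥ 3 and p,t ≥ 0, assume π is a partition in C_=(k,r|p,t) with π^{(2)}_{p+1} = 2t+2, and let s be the smallest integer such that π^{(2)}_s = π^{(2)}_{p+1} + 4(p−s+1) with starting type s₀ or s₁. Then: (1) π^{(2)}_s + 2 does not occur in π; (2) for every i < s, if π^{(2)}_i = π^{(2)}_{p+1} + 4(p−i+1) then π^{(2)}_i is of starting type s₃. -/

import Mathlib

namespace Bressoud

/-- A partition: a weakly decreasing list of positive integers. -/
structure Partition where
  parts : List ℕ
  pos : ∀ x ∈ parts, 0 < x
  sorted : parts.Pairwise (· ≥ ·)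

namespace Partition

/-- `|π|`, the sum of the parts of `π`. -/
def size (π : Partition) : ℕ := π.parts.sum

/-- `ℓ(π)`, the number of parts of `π`. -/
def numParts (π : Partition) : ℕ := π.parts.length

end Partition

lemma exists_pos_not_mem (s : List ℕ) : ∃ n, 0 < n ∧ n ∉ s := by
  refine ⟨s.sum + 1, Nat.succ_pos _, fun h => ?_⟩
  have := List.single_le_sum (l := s) (fun x _ => Nat.zero_le x) _ h
  omega

/-- The least positive integer not occurring in `s`. -/
def mex1 (s : List ℕ) : ℕ := Nat.find (exists_pos_not_mem s)

/-- Parts `p ≥ q` conflict (must receive different marks) when `p - q ≤ 2`,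
with strict inequality when `p` is odd. -/
def conflict (p q : ℕ) : Bool :=
  if p % 2 = 1 then decide (p - q < 2) else decide (p - q ≤ 2)

/-- Greedy computation of the Göllnitz–Gordon marking: the parts are processed
from smallest to largest (second argument: remaining parts in increasing
order; first argument: already processed parts with their marks), and each
part receives the least positive mark different from the marks of all already
processed conflicting parts. -/
def ggAux : List (ℕ × ℕ) → List ℕ → List (ℕ × ℕ)
  | acc, [] => acc
  | acc, p :: rest =>
      ggAux ((p, mex1 ((acc.filter fun q => conflict p q.1).map Prod.snd)) :: acc) rest

/-- The Göllnitz–Gordon marking `GG(π)` of `π`, as a list of (part, mark)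
pairs in decreasing order of parts. -/
def ggMarks (π : Partition) : List (ℕ × ℕ) := ggAux [] π.parts.reverse

/-- There is an `m`-marked part equal to `x` in `GG(π)`. -/
def Marked (π : Partition) (x m : ℕ) : Prop := (x, m) ∈ ggMarks π

instance (π : Partition) (x m : ℕ) : Decidable (Marked π x m) := by
  unfold Marked; infer_instance

/-- The `i`-th row of `GG(π)`: the `i`-marked parts, in decreasing order. -/
def row (π : Partition) (i : ℕ) : List ℕ :=
  ((ggMarks π).filter fun q => q.2 == i).map Prod.fst

/-- `N_i(π)`: the number of `i`-marked parts of `π`. -/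
def Nmk (π : Partition) (i : ℕ) : ℕ := (row π i).length

/-- `π^{(i)}_j` as a natural number (meaningful for `1 ≤ j ≤ N_i(π)`;
junk value `0` otherwise). -/
def nth (π : Partition) (i j : ℕ) : ℕ := (row π i).getD (j - 1) 0

/-- The canonical embedding of the natural numbers into `EReal`. -/
noncomputable def natE (n : ℕ) : EReal := ((n : ℝ) : EReal)

/-- `π^{(i)}_j` as an extended real, with the conventions `π^{(i)}_0 = +∞`
and `π^{(i)}_j = -∞` for `j > N_i(π)`. -/
noncomputable def rowVal (π : Partition) (i j : ℕ) : EReal :=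
  if j = 0 then ⊤
  else
    match (row π i)[j - 1]? with
    | some x => natE x
    | none => ⊥

/-- The largest `l ≥ 0` such that there is no odd part of `π` greater than or
equal to `π^{(2)}_l` (the indices `1 ≤ j ≤ N₂(π)` with this property form an
initial segment, so this is also their number). -/
def bigL (π : Partition) : ℕ :=
  ((List.range' 1 (Nmk π 2)).filter fun j =>
    decide (∀ x ∈ π.parts, x % 2 = 1 → x < nth π 2 j)).length

/-- `startPair π b = (starting type of π^{(2)}_b, s_b(π))` for `1 ≤ b ≤ N₂(π)`.
Starting types are encoded by integers: `-1` stands for `s₋₁`, and `0,1,2,3`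
for `s₀,s₁,s₂,s₃`; the value `9` is a junk value used when no case applies. -/
def startPair (π : Partition) : ℕ → ℤ × ℕ
  | 0 => (9, 0)
  | b + 1 =>
    let v := nth π 2 (b + 1)
    if bigL π < b + 1 then (-1, 0)
    else
      let okLow : Bool :=
        if b = 0 then !decide ((v + 2) ∈ π.parts)
        else !decide (Marked π (v + 2) 1) || decide ((startPair π b).2 = v + 2)
      let ok2 : Bool :=
        if b = 0 then decide (Marked π (v + 2) 1)
        else decide (Marked π (v + 2) 1) && !decide ((startPair π b).2 = v + 2)
      if decide (Marked π (v - 1) 1) && okLow then (0, v - 1)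
      else if decide (Marked π (v - 2) 1) && okLow then (1, v - 2)
      else if ok2 then (2, v + 2)
      else if decide (Marked π v 1) then (3, v)
      else (9, 0)

/-- The starting type of `π^{(2)}_b`, encoded as an integer. -/
def startType (π : Partition) (b : ℕ) : ℤ := (startPair π b).1

/-- The set `C(k,r)`: partitions with no repeated odd part, in which the parts
equal to `1` and `2` have marks at most `r - 1`, and whose Göllnitz–Gordon
marking has at most `k - 1` rows. -/
def C (k r : ℕ) : Set Partition :=
  { π | (∀ x, x % 2 = 1 → π.parts.count x ≤ 1) ∧
        (∀ x m, Marked π x m → x ≤ 2 → m ≤ r - 1) ∧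
        (∀ x m, Marked π x m → m ≤ k - 1) }

/-- The set `C_<(k,r|p,t)`. -/
noncomputable def Clt (k r p t : ℕ) : Set Partition :=
  { π | π ∈ C k r ∧
        (∀ x ∈ π.parts, x % 2 = 1 → x < 2 * t + 1) ∧
        rowVal π 2 (p + 1) < natE (2 * t + 1) ∧
        natE (2 * t + 1) < rowVal π 2 p ∧
        (rowVal π 2 p = natE (2 * t + 2) →
          startType π p = 2 ∨ startType π p = 3) ∧
        (rowVal π 2 (p + 1) = natE (2 * t) →
          startType π (p + 1) = 0 ∨ startType π (p + 1) = 1) }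

/-- The set `C_=(k,r|p,t)`. -/
noncomputable def Ceq (k r p t : ℕ) : Set Partition :=
  { π | π ∈ C k r ∧
        (2 * t + 1) ∈ π.parts ∧
        (∀ x ∈ π.parts, x % 2 = 1 → x ≤ 2 * t + 1) ∧
        (∀ m, Marked π (2 * t + 1) m → m ≤ 2) ∧
        natE (2 * t + 2) ≤ rowVal π 2 p ∧
        rowVal π 2 (p + 1) ≤ natE (2 * t + 2) ∧
        ((∃ j, 1 ≤ j ∧ j ≤ Nmk π 2 ∧ nth π 2 j = 2 * t + 2 ∧ startType π j = 0) →
          rowVal π 2 (p + 1) = natE (2 * t + 2) ∧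
          ∃ i, 1 ≤ i ∧ i ≤ p + 1 ∧
            nth π 2 i = 2 * t + 2 + 4 * (p + 1 - i) ∧
            π.parts.count (2 * t + 2 + 4 * (p + 1 - i)) = 1) ∧
        ((∃ j, 1 ≤ j ∧ j ≤ Nmk π 2 ∧ nth π 2 j = 2 * t + 2 ∧ startType π j = 2) →
          rowVal π 2 p = natE (2 * t + 2)) ∧
        ((2 * t + 2) ∈ π.parts → ¬ Marked π (2 * t + 2) 2 →
          rowVal π 2 p = natE (2 * t + 4) ∧ startType π p = 3 ∧
          ∃ i, 1 ≤ i ∧ i ≤ p ∧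
            nth π 2 i = 2 * t + 4 + 4 * (p - i) ∧
            (2 * t + 4 + 4 * (p - i) + 2) ∉ π.parts) }

/-- The first starting cluster index `p₁` of `π` (with `p₀ = p + 1`): the least
`j ≥ 1` such that `π^{(2)}_j = π^{(2)}_p + 4(p - j)` and all of
`π^{(2)}_j, …, π^{(2)}_p` have the same starting type as `π^{(2)}_p`. -/
def firstCluster (π : Partition) (p : ℕ) : ℕ :=
  ((List.range' 1 p).filter fun j =>
    (List.range' j (p + 1 - j)).all fun i =>
      decide (nth π 2 i = nth π 2 p + 4 * (p - i)) &&
      decide (startType π i = startType π p)).headD p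

/-- The set `ℰ(k,r)` of partitions in `C(k,r)` with no odd parts. -/
def E (k r : ℕ) : Set Partition :=
  { π | π ∈ C k r ∧ ∀ x ∈ π.parts, x % 2 = 0 }

/-- `C_<(k,r|m) = ⋃_{p+t=m} C_<(k,r|p,t)`. -/
noncomputable def Cltm (k r m : ℕ) : Set Partition :=
  { π | ∃ p t, p + t = m ∧ π ∈ Clt k r p t }

/-- `C_=(k,r|m) = ⋃_{p+t=m} C_=(k,r|p,t)`. -/
noncomputable def Ceqm (k r m : ℕ) : Set Partition :=
  { π | ∃ p t, p + t = m ∧ π ∈ Ceq k r p t }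

/-- `I_N`: partitions into distinct odd parts, each at least `2N + 1`. -/
def Iset (N : ℕ) : Set Partition :=
  { ζ | (∀ x ∈ ζ.parts, x % 2 = 1 ∧ 2 * N + 1 ≤ x) ∧ ζ.parts.Nodup }

/-- `F(3,3)`: pairs `(π, ζ)` with `π ∈ ℰ(3,3)` and `ζ ∈ I_{N₂(π)}`. -/
noncomputable def F33 : Set (Partition × Partition) :=
  { pq | pq.1 ∈ E 3 3 ∧ pq.2 ∈ Iset (Nmk pq.1 2) }


section Infra
variable {π : Partition}

lemma mex1_pos (s : List ℕ) : 0 < mex1 s := (Nat.find_spec (exists_pos_not_mem s)).1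
lemma mex1_not_mem (s : List ℕ) : mex1 s ∉ s := (Nat.find_spec (exists_pos_not_mem s)).2
lemma mex1_le (s : List ℕ) {n : ℕ} (h0 : 0 < n) (h : n ∉ s) : mex1 s ≤ n :=
  Nat.find_le ⟨h0, h⟩
lemma mem_of_lt_mex1 {s : List ℕ} {n : ℕ} (h0 : 0 < n) (h : n < mex1 s) : n ∈ s := by
  by_contra hn; exact absurd (mex1_le s h0 hn) (by omega)

lemma conflict_self (x : ℕ) : conflict x x = true := by
  unfold conflict; split <;> simp

lemma conflict_of_even {x y : ℕ} (hx : x % 2 = 0) (h : x - y ≤ 2) : conflict x y = true := by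
  unfold conflict; split <;> simp <;> omega

lemma conflict_of_close {x y : ℕ} (h : x - y ≤ 1) : conflict x y = true := by
  unfold conflict; split <;> simp <;> omega

lemma le_of_not_conflict {x y : ℕ} (h : conflict x y = false) (hyx : y ≤ x) : y + 2 ≤ x := by
  unfold conflict at h; split at h <;> simp at h <;> omega

lemma ge3_of_not_conflict_even {x y : ℕ} (hx : x % 2 = 0) (h : conflict x y = false)
    (hyx : y ≤ x) : y + 3 ≤ x := by
  unfold conflict at h; rw [if_neg (by omega)] at h; simp at h; omega

/-- Invariant of the greedy marking: each mark is the `mex1` of marks of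
conflicting later (smaller) entries. -/
def GInv (l : List (ℕ × ℕ)) : Prop :=
  ∀ i (h : i < l.length), l[i].2 =
    mex1 (((l.drop (i+1)).filter fun r => conflict l[i].1 r.1).map Prod.snd)

lemma ginv_cons {p : ℕ × ℕ} {l : List (ℕ × ℕ)} (h : GInv l)
    (hp : p.2 = mex1 ((l.filter fun r => conflict p.1 r.1).map Prod.snd)) :
    GInv (p :: l) := by
  intro i hi
  cases i with
  | zero => simpa using hp
  | succ n => simpa using h n (by simpa using hi)

lemma ggAux_inv : ∀ (rest : List ℕ) (acc : List (ℕ × ℕ)), GInv acc → GInv (ggAux acc rest)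
  | [], acc, h => h
  | p :: rest, acc, h => ggAux_inv rest _ (ginv_cons h rfl)

lemma ggAux_fst : ∀ (rest : List ℕ) (acc : List (ℕ × ℕ)),
    (ggAux acc rest).map Prod.fst = rest.reverse ++ acc.map Prod.fst
  | [], acc => by simp [ggAux]
  | p :: rest, acc => by
      rw [ggAux, ggAux_fst rest]; simp

lemma ggMarks_fst (π : Partition) : (ggMarks π).map Prod.fst = π.parts := by
  unfold ggMarks; rw [ggAux_fst]; simp

lemma ggMarks_inv (π : Partition) : GInv (ggMarks π) :=
  ggAux_inv _ _ (by intro i h; simp at h)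

lemma ggMarks_length (π : Partition) : (ggMarks π).length = π.parts.length := by
  rw [← ggMarks_fst π, List.length_map]

lemma marked_mem {x m : ℕ} (h : Marked π x m) : x ∈ π.parts := by
  rw [← ggMarks_fst π]; exact List.mem_map_of_mem (f := Prod.fst) h

lemma exists_mark {x : ℕ} (h : x ∈ π.parts) : ∃ m, Marked π x m := by
  rw [← ggMarks_fst π] at h
  obtain ⟨q, hq, hq1⟩ := List.mem_map.1 h
  exact ⟨q.2, by rwa [Marked, show (x, q.2) = q from Prod.ext hq1.symm rfl]⟩

lemma ggMarks_fst_antitone {i j : ℕ} (hij : i ≤ j) (hj : j < (ggMarks π).length) :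
    ((ggMarks π)[j]).1 ≤ ((ggMarks π)[i]'(lt_of_le_of_lt hij hj)).1 := by
  rcases Nat.eq_or_lt_of_le hij with heq | hlt
  · subst heq; exact le_refl _
  · have hs := π.sorted
    rw [← ggMarks_fst π] at hs
    have := List.pairwise_iff_getElem.1 hs i j (by simpa using lt_of_le_of_lt hlt.le hj)
      (by simpa using hj) hlt
    simpa using this

lemma marks_ne {i j : ℕ} (hij : i < j) (hj : j < (ggMarks π).length)
    (hc : conflict ((ggMarks π)[i]'(lt_trans hij hj)).1 ((ggMarks π)[j]).1 = true) :
    ((ggMarks π)[i]'(lt_trans hij hj)).2 ≠ ((ggMarks π)[j]).2 := by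
  have hinv := ggMarks_inv π i (lt_trans hij hj)
  have hmemS : ((ggMarks π)[j]).2 ∈
      (((ggMarks π).drop (i+1)).filter fun r =>
        conflict ((ggMarks π)[i]'(lt_trans hij hj)).1 r.1).map Prod.snd := by
    apply List.mem_map.2
    refine ⟨(ggMarks π)[j], List.mem_filter.2 ⟨?_, hc⟩, rfl⟩
    have : (ggMarks π)[j] = ((ggMarks π).drop (i+1))[j - (i+1)]'(by
        rw [List.length_drop]; omega) := by
      rw [List.getElem_drop]; congr 1; omega
    rw [this]; exact List.getElem_mem _
  rw [hinv]
  intro heq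
  exact mex1_not_mem _ (heq.symm ▸ hmemS)

lemma mark_lower_getElem {i : ℕ} (hi : i < (ggMarks π).length) {m' : ℕ}
    (h1 : 1 ≤ m') (hm : m' < ((ggMarks π)[i]).2) :
    ∃ j, i < j ∧ ∃ (hj : j < (ggMarks π).length),
      conflict ((ggMarks π)[i]).1 ((ggMarks π)[j]).1 = true ∧ ((ggMarks π)[j]).2 = m' := by
  have hinv := ggMarks_inv π i hi
  rw [hinv] at hm
  have hmem := mem_of_lt_mex1 (by omega) hm
  obtain ⟨r, hr, hr2⟩ := List.mem_map.1 hmem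
  obtain ⟨hrd, hrc⟩ := List.mem_filter.1 hr
  obtain ⟨k, hk, hkr⟩ := List.mem_iff_getElem.1 hrd
  rw [List.length_drop] at hk
  refine ⟨i + 1 + k, by omega, by omega, ?_, ?_⟩
  · rw [show (ggMarks π)[i+1+k] = r from by rw [← hkr, List.getElem_drop]]; exact hrc
  · rw [show (ggMarks π)[i+1+k] = r from by rw [← hkr, List.getElem_drop]]; exact hr2

lemma mem_getElem_gg {x m : ℕ} (h : Marked π x m) :
    ∃ i, ∃ (hi : i < (ggMarks π).length), (ggMarks π)[i] = (x, m) := by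
  obtain ⟨i, hi, he⟩ := List.mem_iff_getElem.1 h
  exact ⟨i, hi, he⟩

lemma marked_ne_of_conflict {x m y m' : ℕ} (hx : Marked π x m) (hy : Marked π y m')
    (hlt : y < x) (hc : conflict x y = true) : m ≠ m' := by
  obtain ⟨i, hi, hei⟩ := mem_getElem_gg hx
  obtain ⟨j, hj, hej⟩ := mem_getElem_gg hy
  have hij : i < j := by
    by_contra hij
    have := ggMarks_fst_antitone (π := π) (le_of_not_gt hij) hi
    rw [hei, hej] at this
    simp at this; omega
  have := marks_ne hij hj (by rw [hei, hej]; exact hc)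
  rw [hei, hej] at this; exact this

lemma not_marked_same {x m y : ℕ} (hx : Marked π x m) (hy : Marked π y m)
    (hlt : y < x) (hc : conflict x y = true) : False :=
  marked_ne_of_conflict hx hy hlt hc rfl

lemma marked_lower {x m : ℕ} (hx : Marked π x m) {m' : ℕ} (h1 : 1 ≤ m') (hm : m' < m) :
    ∃ y, y ≤ x ∧ conflict x y = true ∧ Marked π y m' := by
  obtain ⟨i, hi, hei⟩ := mem_getElem_gg hx
  obtain ⟨j, hij, hj, hc, hm'⟩ := mark_lower_getElem hi h1 (by rw [hei]; exact hm)
  refine ⟨((ggMarks π)[j]).1, ?_, by rw [hei] at hc; exact hc, ?_⟩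
  · have := ggMarks_fst_antitone (π := π) hij.le hj
    rw [hei] at this; exact this
  · rw [Marked, show ((ggMarks π)[j]).1 = ((ggMarks π)[j]).1 from rfl]
    have : (ggMarks π)[j] = (((ggMarks π)[j]).1, m') := Prod.ext rfl hm'
    rw [← this]; exact List.getElem_mem _

end Infra
section Rows
variable {π : Partition}

lemma ggMarks_pairwise (π : Partition) :
    (ggMarks π).Pairwise (fun q r => conflict q.1 r.1 = true → q.2 ≠ r.2) := by
  rw [List.pairwise_iff_getElem]
  intro i j hi hj hij
  exact fun hc => marks_ne hij hj hc

lemma mem_row_iff {x i : ℕ} : x ∈ row π i ↔ Marked π x i := by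
  unfold row Marked
  constructor
  · rintro h
    obtain ⟨q, hq, hq1⟩ := List.mem_map.1 h
    obtain ⟨hql, hqi⟩ := List.mem_filter.1 hq
    have : q = (x, i) := Prod.ext hq1 (by simpa using hqi)
    rwa [← this]
  · intro h
    exact List.mem_map.2 ⟨(x, i), List.mem_filter.2 ⟨h, by simp⟩, rfl⟩

lemma row_sorted (π : Partition) (i : ℕ) : (row π i).Pairwise (· ≥ ·) := by
  have hs := π.sorted
  rw [← ggMarks_fst π] at hs
  exact hs.sublist ((List.filter_sublist (l := ggMarks π)).map Prod.fst)

lemma row_pairwise (π : Partition) (i : ℕ) :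
    (row π i).Pairwise (fun a b => conflict a b = false) := by
  unfold row
  rw [List.pairwise_map]
  have h1 := (ggMarks_pairwise π).filter (fun q => q.2 == i)
  apply List.Pairwise.imp_of_mem ?_ h1
  intro a b ha hb hab
  have ha2 : a.2 = i := by simpa using (List.mem_filter.1 ha).2
  have hb2 : b.2 = i := by simpa using (List.mem_filter.1 hb).2
  by_contra hc
  exact hab (by simpa using hc) (ha2.trans hb2.symm)

lemma nth_eq_getElem {j : ℕ} (h1 : 1 ≤ j) (h2 : j ≤ Nmk π 2) :
    ∃ (hj : j - 1 < (row π 2).length), nth π 2 j = (row π 2)[j-1] := by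
  have hj : j - 1 < (row π 2).length := by unfold Nmk at h2; omega
  exact ⟨hj, List.getD_eq_getElem _ _ hj⟩

lemma nth_marked {j : ℕ} (h1 : 1 ≤ j) (h2 : j ≤ Nmk π 2) : Marked π (nth π 2 j) 2 := by
  obtain ⟨hj, he⟩ := nth_eq_getElem h1 h2
  rw [he, ← mem_row_iff]
  exact List.getElem_mem _

lemma nth_gap {a b : ℕ} (h1 : 1 ≤ a) (hab : a < b) (h2 : b ≤ Nmk π 2) :
    nth π 2 b + 2 ≤ nth π 2 a ∧ conflict (nth π 2 a) (nth π 2 b) = false := by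
  obtain ⟨ha', hea⟩ := nth_eq_getElem h1 (le_of_lt (lt_of_lt_of_le hab h2))
  obtain ⟨hb', heb⟩ := nth_eq_getElem (by omega) h2
  have hc : conflict (row π 2)[a-1] (row π 2)[b-1] = false :=
    List.pairwise_iff_getElem.1 (row_pairwise π 2) _ _ ha' hb' (by omega)
  have hle : (row π 2)[b-1] ≤ (row π 2)[a-1] := by
    have := List.pairwise_iff_getElem.1 (row_sorted π 2) _ _ ha' hb' (by omega)
    exact this
  rw [hea, heb]
  exact ⟨le_of_not_conflict hc hle, hc⟩

/-- If `x` is `2`-marked and `x > nth π 2 1`, contradiction; in general a 2-marked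
value equals `nth π 2 j` for some `1 ≤ j ≤ Nmk π 2`. -/
lemma marked2_eq_nth {x : ℕ} (h : Marked π x 2) :
    ∃ j, 1 ≤ j ∧ j ≤ Nmk π 2 ∧ nth π 2 j = x := by
  have hx : x ∈ row π 2 := mem_row_iff.2 h
  obtain ⟨j, hj, he⟩ := List.mem_iff_getElem.1 hx
  have hN : j < Nmk π 2 := by unfold Nmk; exact hj
  refine ⟨j + 1, by omega, by omega, ?_⟩
  obtain ⟨hj', he'⟩ := nth_eq_getElem (j := j+1) (π := π) (by omega) (by omega)
  rw [he']; simpa using he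

lemma bigL_ge (n : ℕ) (hn : n ≤ Nmk π 2)
    (h : ∀ j, 1 ≤ j → j ≤ n → ∀ x ∈ π.parts, x % 2 = 1 → x < nth π 2 j) :
    n ≤ bigL π := by
  unfold bigL
  obtain ⟨d, hd⟩ : ∃ d, Nmk π 2 = n + d := ⟨Nmk π 2 - n, by omega⟩
  have hsplit : List.range' 1 (Nmk π 2) = List.range' 1 n ++ List.range' (1+n) d := by
    rw [hd]; exact (List.range'_append_1 (s := 1) (m := n) (n := d)).symm
  rw [hsplit, List.filter_append, List.length_append]
  have : (List.range' 1 n).filter (fun j =>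
      decide (∀ x ∈ π.parts, x % 2 = 1 → x < nth π 2 j)) = List.range' 1 n := by
    apply List.filter_eq_self.2
    intro j hj
    rw [List.mem_range'] at hj
    obtain ⟨k, hk, he⟩ := hj
    simp only [decide_eq_true_eq]
    exact h j (by omega) (by omega)
  rw [this, List.length_range']
  omega

end Rows
section Start

attribute [local instance] Classical.propDecidable

/-- Propositional form of the `okLow` condition in `startPair`. -/
def OkLowP (π : Partition) (b : ℕ) : Prop :=
  if b = 0 then (nth π 2 1 + 2) ∉ π.parts
  else (¬ Marked π (nth π 2 (b+1) + 2) 1 ∨ (startPair π b).2 = nth π 2 (b+1) + 2)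

/-- Propositional form of the `ok2` condition in `startPair`. -/
def Ok2P (π : Partition) (b : ℕ) : Prop :=
  if b = 0 then Marked π (nth π 2 1 + 2) 1
  else (Marked π (nth π 2 (b+1) + 2) 1 ∧ ¬ (startPair π b).2 = nth π 2 (b+1) + 2)

lemma startPair_succ (π : Partition) (b : ℕ) (hL : ¬ bigL π < b + 1) :
    startPair π (b+1) =
      if Marked π (nth π 2 (b+1) - 1) 1 ∧ OkLowP π b then ((0:ℤ), nth π 2 (b+1) - 1)
      else if Marked π (nth π 2 (b+1) - 2) 1 ∧ OkLowP π b then (1, nth π 2 (b+1) - 2)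
      else if Ok2P π b then (2, nth π 2 (b+1) + 2)
      else if Marked π (nth π 2 (b+1)) 1 then (3, nth π 2 (b+1))
      else (9, 0) := by
  rw [startPair]
  rw [if_neg hL]
  rcases Nat.eq_zero_or_pos b with rfl | hb
  · by_cases hA : Marked π (nth π 2 1 - 1) 1 <;>
    by_cases hB : Marked π (nth π 2 1 - 2) 1 <;>
    by_cases hQ : Marked π (nth π 2 1 + 2) 1 <;>
    by_cases hD : Marked π (nth π 2 1) 1 <;>
    by_cases hM : (nth π 2 1 + 2) ∈ π.parts <;>
    simp [OkLowP, Ok2P, hA, hB, hQ, hD, hM]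
  · have hb0 : b ≠ 0 := by omega
    by_cases hA : Marked π (nth π 2 (b+1) - 1) 1 <;>
    by_cases hB : Marked π (nth π 2 (b+1) - 2) 1 <;>
    by_cases hQ : Marked π (nth π 2 (b+1) + 2) 1 <;>
    by_cases hD : Marked π (nth π 2 (b+1)) 1 <;>
    by_cases hE : (startPair π b).2 = nth π 2 (b+1) + 2 <;>
    simp [OkLowP, Ok2P, hA, hB, hQ, hD, hE, hb0]

lemma startPair_inv01 (π : Partition) (b : ℕ) (hL : ¬ bigL π < b + 1)
    (h : (startPair π (b+1)).1 = 0 ∨ (startPair π (b+1)).1 = 1) :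
    (Marked π (nth π 2 (b+1) - 1) 1 ∨ Marked π (nth π 2 (b+1) - 2) 1) ∧ OkLowP π b := by
  rw [startPair_succ π b hL] at h
  split_ifs at h with h1 h2 h3 h4 <;> simp_all <;> tauto

lemma startPair_fst_two_inv (π : Partition) (b : ℕ) (hL : ¬ bigL π < b + 1)
    (h : (startPair π (b+1)).1 = 2) :
    startPair π (b+1) = (2, nth π 2 (b+1) + 2) ∧ Ok2P π b := by
  have he := startPair_succ π b hL
  rw [he] at h
  split_ifs at h with h1 h2 h3 h4
  · exact absurd h (by simp)
  · exact absurd h (by simp)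
  · rw [he, if_neg h1, if_neg h2, if_pos h3]; exact ⟨rfl, h3⟩
  · exact absurd h (by simp)
  · exact absurd h (by simp)

lemma startPair_snd (π : Partition) (b : ℕ) (hL : ¬ bigL π < b + 1) :
    (startPair π (b+1)).2 = 0 ∨
    ((startPair π (b+1)).2 = nth π 2 (b+1) - 1 ∧ Marked π (nth π 2 (b+1) - 1) 1) ∨
    ((startPair π (b+1)).2 = nth π 2 (b+1) - 2 ∧ (startPair π (b+1)).1 = 1 ∧
      Marked π (nth π 2 (b+1) - 2) 1) ∨
    (startPair π (b+1)).2 = nth π 2 (b+1) + 2 ∨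
    (startPair π (b+1)).2 = nth π 2 (b+1) := by
  rw [startPair_succ π b hL]
  split_ifs with h1 h2 h3 h4 <;> simp_all <;> tauto

lemma startPair_two (π : Partition) (b : ℕ) (hL : ¬ bigL π < b + 1)
    (hok2 : Ok2P π b) (hlow : ¬ OkLowP π b) :
    startPair π (b+1) = (2, nth π 2 (b+1) + 2) := by
  rw [startPair_succ π b hL, if_neg (by tauto), if_neg (by tauto), if_pos hok2]

lemma startPair_three (π : Partition) (b : ℕ) (hL : ¬ bigL π < b + 1)
    (h3 : Marked π (nth π 2 (b+1)) 1)
    (h1 : ¬ Marked π (nth π 2 (b+1) - 1) 1) (h2 : ¬ Marked π (nth π 2 (b+1) - 2) 1)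
    (hok2 : ¬ Ok2P π b) : startPair π (b+1) = (3, nth π 2 (b+1)) := by
  rw [startPair_succ π b hL, if_neg (by tauto), if_neg (by tauto), if_neg hok2, if_pos h3]

lemma startPair_one (π : Partition) (b : ℕ) (hL : ¬ bigL π < b + 1)
    (h2 : Marked π (nth π 2 (b+1) - 2) 1) (h1 : ¬ Marked π (nth π 2 (b+1) - 1) 1)
    (hlow : OkLowP π b) : startPair π (b+1) = (1, nth π 2 (b+1) - 2) := by
  rw [startPair_succ π b hL, if_neg (by tauto), if_pos ⟨h2, hlow⟩]

lemma okLowP_zero (π : Partition) : OkLowP π 0 ↔ (nth π 2 1 + 2) ∉ π.parts := by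
  unfold OkLowP
  rw [if_pos rfl]

lemma okLowP_succ (π : Partition) (c : ℕ) : OkLowP π (c+1) ↔
    (¬ Marked π (nth π 2 (c+1+1) + 2) 1 ∨ (startPair π (c+1)).2 = nth π 2 (c+1+1) + 2) := by
  unfold OkLowP
  rw [if_neg (Nat.succ_ne_zero c)]

lemma ok2P_zero (π : Partition) : Ok2P π 0 ↔ Marked π (nth π 2 1 + 2) 1 := by
  unfold Ok2P
  rw [if_pos rfl]

lemma ok2P_succ (π : Partition) (c : ℕ) : Ok2P π (c+1) ↔
    (Marked π (nth π 2 (c+1+1) + 2) 1 ∧ ¬ (startPair π (c+1)).2 = nth π 2 (c+1+1) + 2) := by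
  unfold Ok2P
  rw [if_neg (Nat.succ_ne_zero c)]

end Start
section Extra
variable {π : Partition}

lemma marked_pos {x m : ℕ} (h : Marked π x m) : 1 ≤ m := by
  obtain ⟨i, hi, hei⟩ := mem_getElem_gg h
  have := ggMarks_inv π i hi
  rw [hei] at this
  simp only at this
  rw [this]
  exact mex1_pos _

lemma conflict_sub_le {x y : ℕ} (h : conflict x y = true) : x - y ≤ 2 := by
  unfold conflict at h; split at h <;> simp at h <;> omega

lemma ok2p_marked {b : ℕ} (h : Ok2P π b) : Marked π (nth π 2 (b+1) + 2) 1 := by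
  unfold Ok2P at h
  split at h
  · next hb => subst hb; simpa using h
  · exact h.1

end Extra

/-- Lemma 2.13: let `π ∈ C_=(k,r|p,t)` with `π^{(2)}_{p+1} = 2t+2`, and let
`s` be the smallest integer with `π^{(2)}_s = π^{(2)}_{p+1} + 4(p-s+1)` of
starting type `s₀` or `s₁`. Then `π^{(2)}_s + 2` does not occur in `π`, and for
`i < s`, if `π^{(2)}_i = π^{(2)}_{p+1} + 4(p-i+1)` then `π^{(2)}_i` is of
starting type `s₃`. -/
theorem Ceq_smallest_cluster (k r p t s : ℕ) (hrk : r ≤ k) (hr : 3 ≤ r)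
    (π : Partition) (hπ : π ∈ Ceq k r p t)
    (hval : rowVal π 2 (p + 1) = natE (2 * t + 2))
    (hs1 : 1 ≤ s)
    (hsP : nth π 2 s = nth π 2 (p + 1) + 4 * (p + 1 - s) ∧
      (startType π s = 0 ∨ startType π s = 1))
    (hsmin : ∀ s', 1 ≤ s' → s' < s →
      ¬ (nth π 2 s' = nth π 2 (p + 1) + 4 * (p + 1 - s') ∧
        (startType π s' = 0 ∨ startType π s' = 1))) :
    (nth π 2 s + 2) ∉ π.parts ∧
    ∀ i, 1 ≤ i → i < s → nth π 2 i = nth π 2 (p + 1) + 4 * (p + 1 - i) →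
      startType π i = 3 := by
  have hoddle : ∀ x ∈ π.parts, x % 2 = 1 → x ≤ 2 * t + 1 := hπ.2.2.1
  -- decode hval
  have hval' : p + 1 ≤ Nmk π 2 ∧ nth π 2 (p+1) = 2*t+2 := by
    unfold rowVal at hval
    rw [if_neg (Nat.succ_ne_zero p)] at hval
    cases h : (row π 2)[(p+1) - 1]? with
    | none =>
        rw [h] at hval
        have hb : (⊥ : EReal) = natE (2*t+2) := hval
        exfalso
        unfold natE at hb
        exact EReal.coe_ne_bot _ hb.symm
    | some x =>
        rw [h] at hval
        obtain ⟨hlt, he⟩ := List.getElem?_eq_some_iff.1 h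
        have hx : x = 2*t+2 := by
          have hv2 : natE x = natE (2*t+2) := hval
          unfold natE at hv2
          have : (x : ℝ) = ((2*t+2 : ℕ) : ℝ) := by exact_mod_cast hv2
          exact_mod_cast this
        constructor
        · unfold Nmk; omega
        · unfold nth; rw [List.getD_eq_getElem _ _ hlt, he, hx]
  obtain ⟨hP1, hvp⟩ := hval'
  have Heven : ∀ x ∈ π.parts, 2*t+1 < x → x % 2 = 0 := by
    intro x hx hgt
    rcases Nat.mod_two_eq_zero_or_one x with h | h
    · exact h
    · exact absurd (hoddle x hx h) (by omega)
  have hnth_ge : ∀ j, 1 ≤ j → j ≤ p+1 → 2*t+2 ≤ nth π 2 j := by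
    intro j h1 h2
    rcases Nat.eq_or_lt_of_le h2 with heq | hlt
    · rw [heq, hvp]
    · have := (nth_gap (π := π) h1 hlt hP1).1; omega
  have hbigL : p + 1 ≤ bigL π := by
    apply bigL_ge (p+1) hP1
    intro j hj1 hj2 x hx hodd
    have := hoddle x hx hodd
    have := hnth_ge j hj1 hj2
    omega
  -- s ≤ p + 1
  have hs_le : s ≤ p + 1 := by
    by_contra hcon
    push_neg at hcon
    have h0 : nth π 2 s = 2*t+2 := by rw [hsP.1, hvp]; omega
    have hsN : s ≤ Nmk π 2 := by
      by_contra hsN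
      have : nth π 2 s = 0 := by
        unfold nth
        apply List.getD_eq_default
        unfold Nmk at hsN; omega
      omega
    have := (nth_gap (π := π) (a := p+1) (b := s) (by omega) (by omega) hsN).1
    omega
  -- single step gap of ≥ 4 in the even region
  have hstep : ∀ a, 1 ≤ a → a+1 ≤ p+1 → nth π 2 (a+1) + 4 ≤ nth π 2 a := by
    intro a h1 h2
    have hga := nth_gap (π := π) (a := a) (b := a+1) h1 (by omega) (by omega)
    have hb_ge : 2*t+2 ≤ nth π 2 (a+1) := hnth_ge _ (by omega) h2
    have hae : nth π 2 a % 2 = 0 :=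
      Heven _ (marked_mem (nth_marked (π := π) (by omega) (by omega))) (by omega)
    have hbe : nth π 2 (a+1) % 2 = 0 :=
      Heven _ (marked_mem (nth_marked (π := π) (by omega) (by omega))) (by omega)
    have := ge3_of_not_conflict_even hae hga.2 (by omega)
    omega
  -- lower bound on nth values below p+1
  have hlow : ∀ m, m ≤ p → 2*t+2 + 4*(p+1) ≤ nth π 2 (p+1-m) + 4*(p+1-m) := by
    intro m
    induction m with
    | zero => intro _; simp [hvp]
    | succ n ih =>
        intro hk
        have h1 := ih (by omega)
        have h2 := hstep (p+1-(n+1)) (by omega) (by omega)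
        have he : p+1-(n+1)+1 = p+1-n := by omega
        rw [he] at h2
        omega
  -- chain propagation
  have hchain : ∀ j0, 1 ≤ j0 → j0 ≤ p+1 → nth π 2 j0 = 2*t+2 + 4*(p+1-j0) →
      ∀ j, j0 ≤ j → j ≤ p+1 → nth π 2 j = 2*t+2 + 4*(p+1-j) := by
    intro j0 h1 h2 heq
    have hup : ∀ m, j0 + m ≤ p+1 → nth π 2 (j0+m) + 4*(j0+m) ≤ 2*t+2 + 4*(p+1) := by
      intro m
      induction m with
      | zero => intro _; simp only [Nat.add_zero]; rw [heq]; omega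
      | succ n ih =>
          intro hm
          have h3 := ih (by omega)
          have h4 := hstep (j0+n) (by omega) (by omega)
          have he : j0 + n + 1 = j0 + (n+1) := by omega
          rw [he] at h4
          omega
    intro j hj1 hj2
    have hu := hup (j - j0) (by omega)
    have hl := hlow (p+1-j) (by omega)
    rw [show j0 + (j - j0) = j by omega] at hu
    rw [show p+1-(p+1-j) = j by omega] at hl
    omega
  have hveq : nth π 2 s = 2*t+2 + 4*(p+1-s) := by rw [hsP.1, hvp]
  obtain ⟨b, rfl⟩ : ∃ b, s = b + 1 := ⟨s - 1, by omega⟩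
  have hfst01 : (startPair π (b+1)).1 = 0 ∨ (startPair π (b+1)).1 = 1 := hsP.2
  obtain ⟨hM01, hOkLow⟩ := startPair_inv01 π b (by omega) hfst01
  have hveven : nth π 2 (b+1) % 2 = 0 := by omega
  have hv_ge : 2*t+2 ≤ nth π 2 (b+1) := by omega
  -- v is not 1-marked
  have hnoM1 : ¬ Marked π (nth π 2 (b+1)) 1 := by
    intro hMv
    rcases hM01 with hA | hB
    · exact not_marked_same hMv hA (by omega) (conflict_of_close (by omega))
    · exact not_marked_same hMv hB (by omega) (conflict_of_even hveven (by omega))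
  -- Claim 1
  have claim1 : (nth π 2 (b+1) + 2) ∉ π.parts := by
    rcases Nat.eq_zero_or_pos b with rfl | hbpos
    · simpa using (okLowP_zero π).1 hOkLow
    · obtain ⟨c, rfl⟩ : ∃ c, b = c + 1 := ⟨b - 1, by omega⟩
      -- the previous pair's second component is not v + 2
      have hwgap := nth_gap (π := π) (a := c+1) (b := c+1+1) (by omega) (by omega) (by omega)
      have hw_ge : 2*t+2 ≤ nth π 2 (c+1) := hnth_ge _ (by omega) (by omega)
      have hw_even : nth π 2 (c+1) % 2 = 0 :=
        Heven _ (marked_mem (nth_marked (π := π) (by omega) (by omega))) (by omega)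
      have hw3 := ge3_of_not_conflict_even hw_even hwgap.2 (by omega)
      have hw4 : nth π 2 (c+1+1) + 4 ≤ nth π 2 (c+1) := by omega
      have hsnd_ne : (startPair π (c+1)).2 ≠ nth π 2 (c+1+1) + 2 := by
        rcases startPair_snd π c (by omega) with h0 | ⟨h1, hm1⟩ | ⟨h1, hf1, hm1⟩ | h1 | h1
        · rw [h0]; omega
        · rw [h1]
          intro hcon
          have hodd := Heven _ (marked_mem hm1) (by omega)
          omega
        · rw [h1]
          intro hcon
          refine hsmin (c+1) (by omega) (by omega) ⟨?_, Or.inr ?_⟩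
          · rw [hvp]; omega
          · unfold startType; rw [hf1]
        · rw [h1]; omega
        · rw [h1]; omega
      have hQ : ¬ Marked π (nth π 2 (c+1+1) + 2) 1 := by
        rcases (okLowP_succ π c).1 hOkLow with h | h
        · exact h
        · exact absurd h hsnd_ne
      -- now suppose v + 2 is a part
      intro hmem
      obtain ⟨m, hm⟩ := exists_mark hmem
      have hmpos := marked_pos hm
      rcases Nat.lt_or_ge m 2 with hm1 | hm2
      · exact hQ (by rwa [show m = 1 by omega] at hm)
      rcases Nat.eq_or_lt_of_le hm2 with hm2' | hm3
      · -- mark 2 : impossible, strictly between consecutive 2-marked parts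
        obtain ⟨j, hj1, hj2, hje⟩ := marked2_eq_nth (by rwa [← hm2'] at hm)
        rcases Nat.lt_or_ge j (c+1+1) with hjlt | hjge
        · rcases Nat.eq_or_lt_of_le (show j ≤ c+1 by omega) with hje' | hjlt'
          · rw [hje'] at hje; omega
          · have := (nth_gap (π := π) (a := j) (b := c+1) (by omega) (by omega) (by omega)).1
            omega
        · rcases Nat.eq_or_lt_of_le hjge with hje' | hjgt
          · rw [← hje'] at hje; omega
          · have := (nth_gap (π := π) (a := c+1+1) (b := j) (by omega) hjgt hj2).1
            omega
      · -- mark ≥ 3 : there is a conflicting 1-marked part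
        obtain ⟨y, hyle, hyc, hy1⟩ := marked_lower hm (le_refl 1) (by omega)
        have hsub := conflict_sub_le hyc
        have hy3 : y = nth π 2 (c+1+1) ∨ y = nth π 2 (c+1+1) + 1 ∨ y = nth π 2 (c+1+1) + 2 := by
          omega
        rcases hy3 with rfl | hy' | hy'
        · exact hnoM1 hy1
        · have := Heven _ (marked_mem hy1) (by omega)
          omega
        · exact hQ (by rwa [← hy'])
  refine ⟨claim1, ?_⟩
  -- Claim 2
  intro i h1i his heqi
  have heqi' : nth π 2 i = 2*t+2 + 4*(p+1-i) := by rw [heqi, hvp]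
  have hi_le : i ≤ p + 1 := by omega
  have hch := hchain i h1i hi_le heqi'
  -- propagation of starting type s₂ down the chain
  have hprop : ∀ m, i + m ≤ b + 1 → startPair π i = (2, nth π 2 i + 2) →
      startPair π (i + m) = (2, nth π 2 (i + m) + 2) := by
    intro m
    induction m with
    | zero => intro _ h; simpa using h
    | succ n ih =>
        intro hk h
        have hprev := ih (by omega) h
        have h1a : 1 ≤ i + n := by omega
        have hva : nth π 2 (i+n) = 2*t+2+4*(p+1-(i+n)) := hch (i+n) (by omega) (by omega)
        have hva1 : nth π 2 (i+n+1) = 2*t+2+4*(p+1-(i+n+1)) := hch (i+n+1) (by omega) (by omega)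
        obtain ⟨d, hd⟩ : ∃ d, i + n = d + 1 := ⟨i + n - 1, by omega⟩
        have hfst2 : (startPair π (d+1)).1 = 2 := by rw [← hd, hprev]
        have hok2d := (startPair_fst_two_inv π d (by omega) hfst2).2
        have hQa : Marked π (nth π 2 (i+n) + 2) 1 := by
          have := ok2p_marked hok2d
          rwa [← hd] at this
        -- the 1-marked companion of nth (i+n) must be nth (i+n) - 2
        have hMva2 : Marked π (nth π 2 (i+n) - 2) 1 := by
          obtain ⟨y, hyle, hyc, hy1⟩ :=
            marked_lower (nth_marked (π := π) (j := i+n) (by omega) (by omega)) (le_refl 1)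
              (by omega)
          have hsub := conflict_sub_le hyc
          have hy3 : y = nth π 2 (i+n) - 2 ∨ y = nth π 2 (i+n) - 1 ∨ y = nth π 2 (i+n) := by
            omega
          rcases hy3 with rfl | hy' | hy'
          · exact hy1
          · exfalso
            have := Heven _ (marked_mem hy1) (by omega)
            omega
          · exfalso
            refine not_marked_same hQa (hy' ▸ hy1) (by omega) ?_
            exact conflict_of_even (by omega) (by omega)
        have hd1 : d + 1 + 1 = i + n + 1 := by omega
        have he2 : nth π 2 (i+n+1) + 2 = nth π 2 (i+n) - 2 := by omega
        have hOk2a : Ok2P π (i+n) := by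
          rw [hd]
          apply (ok2P_succ π d).2
          rw [hd1, ← hd]
          constructor
          · rw [he2]; exact hMva2
          · rw [hprev]; omega
        have hnOkLow : ¬ OkLowP π (i+n) := by
          rw [hd]
          intro hcon
          rcases (okLowP_succ π d).1 hcon with h' | h'
          · rw [hd1] at h'
            exact h' (by rw [he2]; exact hMva2)
          · rw [hd1, ← hd, hprev] at h'
            simp only at h'
            omega
        have hres : startPair π (i+n+1) = (2, nth π 2 (i+n+1) + 2) := by
          exact startPair_two π (i+n) (by omega) hOk2a hnOkLow
        rw [show i + (n+1) = i + n + 1 by omega]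
        exact hres
  have htype_ne2 : (startPair π i).1 ≠ 2 := by
    intro hfst
    obtain ⟨c, hc⟩ : ∃ c, i = c + 1 := ⟨i - 1, by omega⟩
    have hpair := (startPair_fst_two_inv π c (by omega) (by rw [← hc]; exact hfst)).1
    rw [← hc] at hpair
    have := hprop (b + 1 - i) (by omega) hpair
    rw [show i + (b + 1 - i) = b + 1 by omega] at this
    rcases hfst01 with h | h <;> rw [this] at h <;> simp at h
  have hv_i_even : nth π 2 i % 2 = 0 := by omega
  have hv_i_ge : 2*t+6 ≤ nth π 2 i := by omega
  have htype_ne01 : ¬ (startType π i = 0 ∨ startType π i = 1) := by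
    intro h
    exact hsmin i h1i his ⟨heqi, h⟩
  obtain ⟨c, rfl⟩ : ∃ c, i = c + 1 := ⟨i - 1, by omega⟩
  -- v_i + 2 is not 1-marked
  have hQi : ¬ Marked π (nth π 2 (c+1) + 2) 1 := by
    intro hQ
    apply htype_ne2
    have hok : startPair π (c+1) = (2, nth π 2 (c+1) + 2) := by
      rcases Nat.eq_zero_or_pos c with rfl | hcpos
      · apply startPair_two π 0 (by omega)
        · exact (ok2P_zero π).2 (by simpa using hQ)
        · intro hcon
          have := (okLowP_zero π).1 hcon
          exact this (by simpa using marked_mem hQ)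
      · obtain ⟨d, rfl⟩ : ∃ d, c = d + 1 := ⟨c - 1, by omega⟩
        -- previous pair's second component is not v_i + 2
        have hwgap := nth_gap (π := π) (a := d+1) (b := d+1+1) (by omega) (by omega) (by omega)
        have hw_ge : 2*t+2 ≤ nth π 2 (d+1) := hnth_ge _ (by omega) (by omega)
        have hw_even : nth π 2 (d+1) % 2 = 0 :=
          Heven _ (marked_mem (nth_marked (π := π) (by omega) (by omega))) (by omega)
        have hw3 := ge3_of_not_conflict_even hw_even hwgap.2 (by omega)
        have hw4 : nth π 2 (d+1+1) + 4 ≤ nth π 2 (d+1) := by omega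
        have hsnd_ne : (startPair π (d+1)).2 ≠ nth π 2 (d+1+1) + 2 := by
          rcases startPair_snd π d (by omega) with h0 | ⟨h1, hm1⟩ | ⟨h1, hf1, hm1⟩ | h1 | h1
          · rw [h0]; omega
          · rw [h1]
            intro hcon
            have hodd := Heven _ (marked_mem hm1) (by omega)
            omega
          · rw [h1]
            intro hcon
            refine hsmin (d+1) (by omega) (by omega) ⟨?_, Or.inr ?_⟩
            · rw [hvp]
              have := hch (d+1+1) (by omega) (by omega)
              omega
            · unfold startType; rw [hf1]
          · rw [h1]; omega
          · rw [h1]; omega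
        apply startPair_two π (d+1) (by omega)
        · exact (ok2P_succ π d).2 ⟨hQ, hsnd_ne⟩
        · intro hcon
          rcases (okLowP_succ π d).1 hcon with h' | h'
          · exact h' hQ
          · exact hsnd_ne h'
    rw [hok]
  -- v_i - 1 is not 1-marked (it would be an odd part > 2t+1)
  have hAi : ¬ Marked π (nth π 2 (c+1) - 1) 1 := by
    intro hA
    have := Heven _ (marked_mem hA) (by omega)
    omega
  -- companion analysis
  obtain ⟨y, hyle, hyc, hy1⟩ :=
    marked_lower (nth_marked (π := π) (j := c+1) (by omega) (by omega)) (le_refl 1) (by omega)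
  have hsub := conflict_sub_le hyc
  have hy3 : y = nth π 2 (c+1) - 2 ∨ y = nth π 2 (c+1) - 1 ∨ y = nth π 2 (c+1) := by omega
  rcases hy3 with rfl | hy' | hy'
  · -- companion is v_i - 2 : impossible for i < s
    exfalso
    by_cases hok : OkLowP π c
    · have := startPair_one π c (by omega) hy1 hAi hok
      apply htype_ne01
      right
      unfold startType; rw [this]
    · rcases Nat.eq_zero_or_pos c with rfl | hcpos
      · have hmem : nth π 2 1 + 2 ∈ π.parts := by
          by_contra hnm
          exact hok ((okLowP_zero π).2 hnm)
        obtain ⟨m, hm⟩ := exists_mark hmem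
        have hmpos := marked_pos hm
        rcases Nat.lt_or_ge m 2 with hm1 | hm2
        · refine hQi ?_
          have : m = 1 := by omega
          rw [this] at hm
          simpa using hm
        rcases Nat.eq_or_lt_of_le hm2 with hm2' | hm3
        · obtain ⟨j, hj1, hj2, hje⟩ := marked2_eq_nth (by rwa [← hm2'] at hm)
          rcases Nat.eq_or_lt_of_le hj1 with hje' | hjgt
          · rw [← hje'] at hje
            have h01 : nth π 2 (0+1) = nth π 2 1 := by norm_num
            omega
          · have := (nth_gap (π := π) (a := 1) (b := j) (by omega) hjgt hj2).1
            have h01 : nth π 2 (0+1) = nth π 2 1 := by norm_num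
            omega
        · obtain ⟨y', hyle', hyc', hy1'⟩ := marked_lower hm (le_refl 1) (by omega)
          have hsub' := conflict_sub_le hyc'
          have h01 : nth π 2 (0+1) = nth π 2 1 := by norm_num
          have hy3' : y' = nth π 2 1 ∨ y' = nth π 2 1 + 1 ∨ y' = nth π 2 1 + 2 := by omega
          rcases hy3' with hy'' | hy'' | hy''
          · refine not_marked_same hy1' (by rwa [h01] at hy1 : Marked π (nth π 2 1 - 2) 1) ?_ ?_
            · omega
            · rw [hy'']; exact conflict_of_even (by omega) (by omega)
          · have := Heven _ (marked_mem hy1') (by omega)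
            omega
          · refine hQi ?_
            rw [h01, ← hy'']
            exact hy1'
      · obtain ⟨e, rfl⟩ : ∃ e, c = e + 1 := ⟨c - 1, by omega⟩
        have : Marked π (nth π 2 (e+1+1) + 2) 1 := by
          by_contra hM
          exact hok ((okLowP_succ π e).2 (Or.inl hM))
        exact hQi this
  · -- companion is v_i - 1 : odd, impossible
    exfalso
    rw [hy'] at hy1
    exact hAi hy1
  · -- companion is v_i itself : starting type is s₃
    rw [hy'] at hy1
    have hBi : ¬ Marked π (nth π 2 (c+1) - 2) 1 := by
      intro hB
      exact not_marked_same hy1 hB (by omega) (conflict_of_even (by omega) (by omega))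
    have hok2 : ¬ Ok2P π c := by
      rcases Nat.eq_zero_or_pos c with rfl | hcpos
      · intro hcon
        exact hQi (by simpa using (ok2P_zero π).1 hcon)
      · obtain ⟨e, rfl⟩ : ∃ e, c = e + 1 := ⟨c - 1, by omega⟩
        intro hcon
        exact hQi ((ok2P_succ π e).1 hcon).1
    have := startPair_three π c (by omega) hy1 hAi hBi hok2
    unfold startType; rw [this]

end Bressoud
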